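/- Let F be a field, let k_1,...,k_n be nonnegative integers, and let A_1,...,A_n be finite subsets of F with |A_i| > k_i for each i. If f ∈ F[x_1,...,x_n] has total degree k_1 + ... + k_n and the coefficient of the monomial x_1^{k_1}···x_n^{k_n} in f is nonzero, then there exist a_1 ∈ A_1, ..., a_n ∈ A_n with f(a_1,...,a_n) ≠ 0. -/
import Mathlib

open Polynomial Lagrange Finset

lemma lagrange_sum_pow {F : Type*} [Field F] [DecidableEq F] (A : Finset F) (d : ℕ)
    (hd : d < A.card) :
    ∑ a ∈ A, a ^ d * ∏ b ∈ A.erase a, (a - b)⁻¹ = if d = A.card - 1 then 1 else 0 := by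
  have hinj : Set.InjOn (id : F → F) A := Function.injective_id.injOn
  have hdeg : (X ^ d : F[X]).degree < A.card := by
    simpa [degree_X_pow] using (by exact_mod_cast hd : ((d : ℕ) : WithBot ℕ) < (A.card : WithBot ℕ))
  have h := Lagrange.eq_interpolate (f := (X ^ d : F[X])) hinj hdeg
  have hcoeff := congrArg (fun p => p.coeff (A.card - 1)) h
  simp only [Lagrange.interpolate_apply, finset_sum_coeff, coeff_C_mul, coeff_X_pow] at hcoeff
  have hb : ∀ a ∈ A, (Lagrange.basis A id a).coeff (A.card - 1)
      = ∏ b ∈ A.erase a, (a - b)⁻¹ := by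
    intro a ha
    rw [basis_eq_prod_sub_inv_mul_nodal_div ha, ← nodal_erase_eq_nodal_div ha, coeff_C_mul]
    have hm : (nodal (A.erase a) id).Monic := nodal_monic
    have hnd : (nodal (A.erase a) id).natDegree = A.card - 1 := by
      rw [natDegree_nodal, card_erase_of_mem ha]
    rw [← hnd, hm.coeff_natDegree, mul_one]
    simp [nodalWeight]
  have hiff : (if d = A.card - 1 then (1:F) else 0) = if A.card - 1 = d then 1 else 0 := by
    simp [eq_comm]
  rw [hiff, hcoeff]
  refine Finset.sum_congr rfl fun a ha => ?_
  rw [hb a ha]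
  simp [eval_pow]

/-- Combinatorial Nullstellensatz (Alon). -/
theorem combinatorial_nullstellensatz {F : Type*} [Field F] {n : ℕ}
    (k : Fin n → ℕ) (A : Fin n → Finset F) (hA : ∀ i, k i < (A i).card)
    (f : MvPolynomial (Fin n) F)
    (hdeg : f.totalDegree = ∑ i, k i)
    (hcoeff : f.coeff (Finsupp.equivFunOnFinite.symm k) ≠ 0) :
    ∃ a : Fin n → F, (∀ i, a i ∈ A i) ∧ MvPolynomial.eval a f ≠ 0 := by
  classical
  -- shrink each A i to exactly k i + 1 elements
  have hex : ∀ i, ∃ B ⊆ A i, B.card = k i + 1 :=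
    fun i => Finset.exists_subset_card_eq (hA i)
  choose B hBA hBcard using hex
  set κ : (Fin n) →₀ ℕ := Finsupp.equivFunOnFinite.symm k with hκ
  have hκapp : ∀ i, κ i = k i := fun i => rfl
  -- the weight function
  set w : Fin n → F → F := fun i x => ∏ b ∈ (B i).erase x, (x - b)⁻¹ with hw
  -- one-variable evaluation
  have hL : ∀ (i : Fin n) (d : ℕ), d < k i + 1 →
      ∑ x ∈ B i, x ^ d * w i x = if d = k i then 1 else 0 := by
    intro i d hd
    have := lagrange_sum_pow (B i) d (by rw [hBcard]; exact hd)
    rwa [hBcard] at this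
  -- key sum computation
  have key : ∑ a ∈ Fintype.piFinset B, (MvPolynomial.eval a f) * ∏ i, w i (a i)
      = f.coeff κ := by
    have heval : ∀ a : Fin n → F, MvPolynomial.eval a f
        = ∑ d ∈ f.support, f.coeff d * ∏ i, (a i) ^ (d i) :=
      fun a => MvPolynomial.eval_eq' a f
    calc ∑ a ∈ Fintype.piFinset B, (MvPolynomial.eval a f) * ∏ i, w i (a i)
        = ∑ d ∈ f.support, f.coeff d *
            ∑ a ∈ Fintype.piFinset B, ∏ i, ((a i) ^ (d i) * w i (a i)) := by
          simp_rw [heval, Finset.sum_mul, Finset.mul_sum]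
          rw [Finset.sum_comm]
          refine Finset.sum_congr rfl fun d _ => Finset.sum_congr rfl fun a _ => ?_
          rw [mul_assoc, ← Finset.prod_mul_distrib]
      _ = ∑ d ∈ f.support, f.coeff d * ∏ i, ∑ x ∈ B i, x ^ (d i) * w i x := by
          refine Finset.sum_congr rfl fun d _ => ?_
          rw [Finset.prod_univ_sum]
      _ = ∑ d ∈ f.support, f.coeff d * (if d = κ then 1 else 0) := by
          refine Finset.sum_congr rfl fun d hd => ?_
          congr 1
          have hdsum : ∑ i, d i ≤ ∑ i, k i := by
            rw [← hdeg]
            have := MvPolynomial.le_totalDegree hd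
            calc ∑ i, d i = ∑ i ∈ d.support, d i :=
                  (Finset.sum_subset (Finset.subset_univ _)
                    (fun i _ hi => Finsupp.notMem_support_iff.mp hi)).symm
              _ ≤ f.totalDegree := by simpa [Finsupp.sum] using this
          by_cases hdk : d = κ
          · rw [if_pos hdk, hdk]
            refine Finset.prod_eq_one fun i _ => ?_
            rw [hL i (κ i) (by rw [hκapp]; omega)]
            simp [hκapp]
          · rw [if_neg hdk]
            have : ∃ j, d j < k j := by
              by_contra hcon
              push_neg at hcon
              have hall : ∀ j, d j = k j := by
                intro j
                by_contra hne
                have : ∑ i, k i < ∑ i, d i :=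
                  Finset.sum_lt_sum (fun i _ => hcon i)
                    ⟨j, Finset.mem_univ j, lt_of_le_of_ne (hcon j) (Ne.symm hne)⟩
                omega
              exact hdk (Finsupp.ext fun i => by rw [hall i, hκapp])
            obtain ⟨j, hj⟩ := this
            refine Finset.prod_eq_zero (Finset.mem_univ j) ?_
            rw [hL j (d j) (by omega)]
            simp [Nat.ne_of_lt hj]
      _ = f.coeff κ := by
          rw [Finset.sum_congr rfl fun d _ => by rw [mul_ite, mul_one, mul_zero]]
          rw [Finset.sum_ite_eq' f.support κ (fun d => f.coeff d)]
          rw [if_pos (MvPolynomial.mem_support_iff.mpr hcoeff)]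
  -- conclude
  have hne : ∑ a ∈ Fintype.piFinset B, (MvPolynomial.eval a f) * ∏ i, w i (a i) ≠ 0 := by
    rw [key]; exact hcoeff
  obtain ⟨a, ha, hane⟩ := Finset.exists_ne_zero_of_sum_ne_zero hne
  refine ⟨a, fun i => hBA i (Fintype.mem_piFinset.mp ha i), fun h0 => hane (by rw [h0, zero_mul])⟩
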